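/- Let ℙ and ℚ be preorders whose transitive closures are countable, and let i : ℙ → ℚ be a dense embedding. Then the Stone spaces St(ℙ) and St(ℚ) are isomorphic as Baire spaces: there exist comeager sets D ⊆ St(ℙ) and E ⊆ St(ℚ) and a homeomorphism between D and E. -/

import Mathlib

/-- A filter on a preorder: a nonempty, upward closed, downward directed set. -/
def IsPFilter {P : Type*} [Preorder P] (F : Set P) : Prop :=
  F.Nonempty ∧ (∀ p q : P, p ∈ F → p ≤ q → q ∈ F) ∧
    (∀ p q : P, p ∈ F → q ∈ F → ∃ r ∈ F, r ≤ p ∧ r ≤ q)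

/-- An ultrafilter on a preorder: a maximal filter. -/
def IsPUltrafilter {P : Type*} [Preorder P] (F : Set P) : Prop :=
  IsPFilter F ∧ ∀ G : Set P, IsPFilter G → F ⊆ G → G = F

/-- The Stone space of a preorder: the set of all ultrafilters on it. -/
def StoneSp (P : Type*) [Preorder P] : Type _ := {u : Set P // IsPUltrafilter u}

/-- The basic open set `O_p = {u ∈ St(ℙ) : p ∈ u}`. -/
def basicO {P : Type*} [Preorder P] (p : P) : Set (StoneSp P) :=
  {u : StoneSp P | p ∈ u.1}

/-- The topology on `St(ℙ)` generated by the sets `O_p`. -/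
instance stoneTopology (P : Type*) [Preorder P] : TopologicalSpace (StoneSp P) :=
  TopologicalSpace.generateFrom (Set.range fun p : P => basicO p)

/-- Two conditions are compatible if they have a common extension. -/
def Compat {P : Type*} [Preorder P] (p q : P) : Prop := ∃ r : P, r ≤ p ∧ r ≤ q

section Aux

open Set

variable {R : Type*} [Preorder R]

/-- Every element of a preorder lies in some ultrafilter (Zorn). -/
lemma exists_pultrafilter_mem (t : R) : ∃ u : Set R, IsPUltrafilter u ∧ t ∈ u := by
  have hup : IsPFilter {x : R | t ≤ x} :=
    ⟨⟨t, le_refl t⟩, fun p q hp hpq => le_trans hp hpq,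
      fun p q hp hq => ⟨t, le_refl t, hp, hq⟩⟩
  obtain ⟨m, hxm, hm⟩ := zorn_subset_nonempty {F : Set R | IsPFilter F ∧ t ∈ F}
    (fun c hcS hchain hcne => by
      refine ⟨⋃₀ c, ⟨⟨?_, ?_, ?_⟩, ?_⟩, fun s hs => subset_sUnion_of_mem hs⟩
      · obtain ⟨F, hF⟩ := hcne
        exact ⟨t, F, hF, (hcS hF).2⟩
      · rintro p q ⟨F, hF, hp⟩ hpq
        exact ⟨F, hF, (hcS hF).1.2.1 p q hp hpq⟩
      · rintro p q ⟨F, hF, hp⟩ ⟨G, hG, hq⟩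
        rcases hchain.total hF hG with h | h
        · obtain ⟨r, hr, h1, h2⟩ := (hcS hG).1.2.2 p q (h hp) hq
          exact ⟨r, ⟨G, hG, hr⟩, h1, h2⟩
        · obtain ⟨r, hr, h1, h2⟩ := (hcS hF).1.2.2 p q hp (h hq)
          exact ⟨r, ⟨F, hF, hr⟩, h1, h2⟩
      · obtain ⟨F, hF⟩ := hcne
        exact ⟨F, hF, (hcS hF).2⟩)
    {x : R | t ≤ x} ⟨hup, le_refl t⟩
  refine ⟨m, ⟨hm.prop.1, fun G hG hsub => ?_⟩, hm.prop.2⟩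
  exact Set.Subset.antisymm (hm.le_of_ge ⟨hG, hsub hm.prop.2⟩ hsub) hsub

lemma isOpen_basicO (p : R) : IsOpen (basicO p) :=
  TopologicalSpace.isOpen_generateFrom_of_mem ⟨p, rfl⟩

/-- In any open set, every point has a basic neighbourhood around it. -/
lemma exists_basicO_subset {U : Set (StoneSp R)} (hU : IsOpen U) :
    ∀ u ∈ U, ∃ r ∈ u.1, basicO r ⊆ U := by
  have hU' : TopologicalSpace.GenerateOpen (Set.range fun p : R => basicO p) U := hU
  clear hU
  induction hU' with
  | basic s hs =>
    obtain ⟨p, rfl⟩ := hs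
    exact fun u hu => ⟨p, hu, fun _ hw => hw⟩
  | univ =>
    intro u _
    obtain ⟨t, ht⟩ := u.2.1.1
    exact ⟨t, ht, fun _ _ => trivial⟩
  | inter U V hUo hVo ihU ihV =>
    intro u hu
    obtain ⟨r1, hr1, hs1⟩ := ihU u hu.1
    obtain ⟨r2, hr2, hs2⟩ := ihV u hu.2
    obtain ⟨r, hr, hle1, hle2⟩ := u.2.1.2.2 r1 r2 hr1 hr2
    exact ⟨r, hr, fun w hw =>
      ⟨hs1 (w.2.1.2.1 r r1 hw hle1), hs2 (w.2.1.2.1 r r2 hw hle2)⟩⟩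
  | sUnion S hS ih =>
    intro u hu
    obtain ⟨V, hV, huV⟩ := hu
    obtain ⟨r, hr, hsub⟩ := ih V hV u huV
    exact ⟨r, hr, fun w hw => ⟨V, hV, hsub hw⟩⟩

/-- A union of basic open sets over a "dense" set of conditions is residual. -/
lemma residual_biUnion_basicO {A : Set R} (h : ∀ r : R, ∃ t, t ∈ A ∧ t ≤ r) :
    (⋃ p ∈ A, basicO p) ∈ residual (StoneSp R) := by
  apply residual_of_dense_open
  · exact isOpen_biUnion fun p _ => isOpen_basicO p
  · rw [dense_iff_inter_open]
    rintro U hU ⟨u, hu⟩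
    obtain ⟨r, hr, hsub⟩ := exists_basicO_subset hU u hu
    obtain ⟨t, htA, htr⟩ := h r
    obtain ⟨w, hw, htw⟩ := exists_pultrafilter_mem t
    refine ⟨⟨w, hw⟩, hsub ?_, ?_⟩
    · exact hw.1.2.1 t r htw htr
    · exact Set.mem_biUnion htA htw

/-- Continuity into a Stone space can be checked on the basic open sets. -/
lemma continuous_into_stone {X : Type*} [TopologicalSpace X] (f : X → StoneSp R)
    (h : ∀ p : R, IsOpen (f ⁻¹' basicO p)) : Continuous f := by
  have : @Continuous X (StoneSp R) _
      (TopologicalSpace.generateFrom (Set.range fun p : R => basicO p)) f := by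
    apply continuous_generateFrom_iff.mpr
    rintro s ⟨p, rfl⟩
    exact h p
  exact this

end Aux

/-- If `ℙ`, `ℚ` are countable preorders (elements of `H_{ω₁}`) and `i : ℙ → ℚ` is a dense
embedding (order-preserving, incompatibility-preserving, with dense image), then
`St(ℙ)` and `St(ℚ)` are isomorphic as Baire spaces: there are comeager sets
`D ⊆ St(ℙ)`, `E ⊆ St(ℚ)` and a homeomorphism between `D` and `E`. -/
theorem stone_spaces_isomorphic_as_baire_spaces
    {P Q : Type} [Preorder P] [Preorder Q] [Countable P] [Countable Q]
    (i : P → Q)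
    (hmono : ∀ p p' : P, p ≤ p' → i p ≤ i p')
    (hincomp : ∀ p p' : P, ¬ Compat p p' → ¬ Compat (i p) (i p'))
    (hdense : ∀ q : Q, ∃ p : P, i p ≤ q) :
    ∃ (D : Set (StoneSp P)) (E : Set (StoneSp Q)),
      IsMeagre Dᶜ ∧ IsMeagre Eᶜ ∧ Nonempty (D ≃ₜ E) := by
  classical
  -- compatibility is reflected by `i`
  have compat_pre : ∀ p p' : P, Compat (i p) (i p') → Compat p p' := by
    intro p p' h
    by_contra hc
    exact hincomp p p' hc h
  -- the two families of conditions
  set cond1 : Q → P → Prop := fun q p => i p ≤ q ∨ ¬ Compat (i p) q with hcond1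
  set cond2 : P → P → P → Prop :=
    fun p1 p2 p => (p ≤ p1 ∧ p ≤ p2) ∨ ¬ Compat p p1 ∨ ¬ Compat p p2 with hcond2
  -- density of the conditions in P
  have key1 : ∀ (q : Q) (r : P), ∃ t, cond1 q t ∧ t ≤ r := by
    intro q r
    by_cases h : Compat (i r) q
    · obtain ⟨s, hs1, hs2⟩ := h
      obtain ⟨p', hp'⟩ := hdense s
      obtain ⟨t, ht1, ht2⟩ := compat_pre p' r ⟨i p', le_refl _, le_trans hp' hs1⟩
      exact ⟨t, Or.inl (le_trans (le_trans (hmono t p' ht1) hp') hs2), ht2⟩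
    · exact ⟨r, Or.inr h, le_refl r⟩
  have key2 : ∀ (p1 p2 : P) (r : P), ∃ t, cond2 p1 p2 t ∧ t ≤ r := by
    intro p1 p2 r
    by_cases h1 : Compat r p1
    · obtain ⟨r', h1a, h1b⟩ := h1
      by_cases h2 : Compat r' p2
      · obtain ⟨t, h2a, h2b⟩ := h2
        exact ⟨t, Or.inl ⟨le_trans h2a h1b, h2b⟩, le_trans h2a h1a⟩
      · exact ⟨r', Or.inr (Or.inr h2), h1a⟩
    · exact ⟨r, Or.inr (Or.inl h1), le_refl r⟩
  -- density of the image conditions in Q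
  have key1Q : ∀ (q : Q) (r : Q), ∃ p, cond1 q p ∧ i p ≤ r := by
    intro q r
    obtain ⟨p₀, hp₀⟩ := hdense r
    by_cases h : Compat (i p₀) q
    · obtain ⟨s, hs1, hs2⟩ := h
      obtain ⟨p, hp⟩ := hdense s
      exact ⟨p, Or.inl (le_trans hp hs2), le_trans (le_trans hp hs1) hp₀⟩
    · exact ⟨p₀, Or.inr h, hp₀⟩
  have key2Q : ∀ (p1 p2 : P) (r : Q), ∃ p, cond2 p1 p2 p ∧ i p ≤ r := by
    intro p1 p2 r
    obtain ⟨p₀, hp₀⟩ := hdense r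
    obtain ⟨t, ht, htp₀⟩ := key2 p1 p2 p₀
    exact ⟨t, ht, le_trans (hmono t p₀ htp₀) hp₀⟩
  -- the comeager sets
  set D : Set (StoneSp P) :=
    {u | (∀ q : Q, ∃ p, p ∈ u.1 ∧ cond1 q p) ∧
      (∀ p1 p2 : P, ∃ p, p ∈ u.1 ∧ cond2 p1 p2 p)} with hD
  set E : Set (StoneSp Q) :=
    {v | (∀ q : Q, ∃ p, i p ∈ v.1 ∧ cond1 q p) ∧
      (∀ p1 p2 : P, ∃ p, i p ∈ v.1 ∧ cond2 p1 p2 p)} with hE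
  have hDres : D ∈ residual (StoneSp P) := by
    have h1 : (⋂ q : Q, ⋃ p ∈ {p : P | cond1 q p}, basicO p) ∈ residual (StoneSp P) :=
      countable_iInter_mem.mpr fun q => residual_biUnion_basicO fun r =>
        (key1 q r).imp fun t ht => ⟨ht.1, ht.2⟩
    have h2 : (⋂ pp : P × P, ⋃ p ∈ {p : P | cond2 pp.1 pp.2 p}, basicO p)
        ∈ residual (StoneSp P) :=
      countable_iInter_mem.mpr fun pp => residual_biUnion_basicO fun r =>
        (key2 pp.1 pp.2 r).imp fun t ht => ⟨ht.1, ht.2⟩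
    refine Filter.mem_of_superset (Filter.inter_mem h1 h2) ?_
    rintro u ⟨hu1, hu2⟩
    simp only [Set.mem_iInter, Set.mem_iUnion, Set.mem_setOf_eq] at hu1 hu2
    exact ⟨fun q => by obtain ⟨p, hp, hpu⟩ := hu1 q; exact ⟨p, hpu, hp⟩,
      fun p1 p2 => by obtain ⟨p, hp, hpu⟩ := hu2 (p1, p2); exact ⟨p, hpu, hp⟩⟩
  have hEres : E ∈ residual (StoneSp Q) := by
    have h1 : (⋂ q : Q, ⋃ s ∈ {s : Q | ∃ p, s = i p ∧ cond1 q p}, basicO s)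
        ∈ residual (StoneSp Q) :=
      countable_iInter_mem.mpr fun q => residual_biUnion_basicO fun r => by
        obtain ⟨p, hp, hpr⟩ := key1Q q r
        exact ⟨i p, ⟨p, rfl, hp⟩, hpr⟩
    have h2 : (⋂ pp : P × P, ⋃ s ∈ {s : Q | ∃ p, s = i p ∧ cond2 pp.1 pp.2 p}, basicO s)
        ∈ residual (StoneSp Q) :=
      countable_iInter_mem.mpr fun pp => residual_biUnion_basicO fun r => by
        obtain ⟨p, hp, hpr⟩ := key2Q pp.1 pp.2 r
        exact ⟨i p, ⟨p, rfl, hp⟩, hpr⟩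
    refine Filter.mem_of_superset (Filter.inter_mem h1 h2) ?_
    rintro v ⟨hv1, hv2⟩
    simp only [Set.mem_iInter, Set.mem_iUnion, Set.mem_setOf_eq] at hv1 hv2
    constructor
    · intro q
      obtain ⟨s, ⟨p, rfl, hp⟩, hsv⟩ := hv1 q
      exact ⟨p, hsv, hp⟩
    · intro p1 p2
      obtain ⟨s, ⟨p, rfl, hp⟩, hsv⟩ := hv2 (p1, p2)
      exact ⟨p, hsv, hp⟩
  -- forward and backward maps
  set Fs : StoneSp P → Set Q := fun u => {q | ∃ p, p ∈ u.1 ∧ i p ≤ q} with hFs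
  set Gs : StoneSp Q → Set P := fun v => {p | i p ∈ v.1} with hGs
  have hFfil : ∀ u : StoneSp P, IsPFilter (Fs u) := by
    intro u
    refine ⟨?_, ?_, ?_⟩
    · obtain ⟨t, ht⟩ := u.2.1.1
      exact ⟨i t, t, ht, le_refl _⟩
    · rintro q q' ⟨p, hp, hle⟩ hqq'
      exact ⟨p, hp, le_trans hle hqq'⟩
    · rintro q1 q2 ⟨p1, hp1, hle1⟩ ⟨p2, hp2, hle2⟩
      obtain ⟨r, hr, h1, h2⟩ := u.2.1.2.2 p1 p2 hp1 hp2
      exact ⟨i r, ⟨r, hr, le_refl _⟩,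
        le_trans (hmono r p1 h1) hle1, le_trans (hmono r p2 h2) hle2⟩
  have hFult : ∀ u : StoneSp P, u ∈ D → IsPUltrafilter (Fs u) := by
    intro u hu
    refine ⟨hFfil u, fun G hG hsub => ?_⟩
    refine Set.Subset.antisymm (fun q hq => ?_) hsub
    obtain ⟨p, hp, hc⟩ := hu.1 q
    rcases hc with hle | hnc
    · exact ⟨p, hp, hle⟩
    · exfalso
      obtain ⟨r, _, h1, h2⟩ := hG.2.2 (i p) q (hsub ⟨p, hp, le_refl _⟩) hq
      exact hnc ⟨r, h1, h2⟩
  have hFinE : ∀ u : StoneSp P, ∀ hu : u ∈ D,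
      (⟨Fs u, hFult u hu⟩ : StoneSp Q) ∈ E := by
    intro u hu
    constructor
    · intro q
      obtain ⟨p, hp, hc⟩ := hu.1 q
      exact ⟨p, ⟨p, hp, le_refl _⟩, hc⟩
    · intro p1 p2
      obtain ⟨p, hp, hc⟩ := hu.2 p1 p2
      exact ⟨p, ⟨p, hp, le_refl _⟩, hc⟩
  have hGfil : ∀ v : StoneSp Q, v ∈ E → IsPFilter (Gs v) := by
    intro v hv
    refine ⟨?_, ?_, ?_⟩
    · obtain ⟨s, hs⟩ := v.2.1.1
      obtain ⟨p, hp, _⟩ := hv.1 s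
      exact ⟨p, hp⟩
    · intro p p' hp hpp'
      exact v.2.1.2.1 (i p) (i p') hp (hmono p p' hpp')
    · intro p1 p2 hp1 hp2
      obtain ⟨p, hp, hc⟩ := hv.2 p1 p2
      rcases hc with ⟨h1, h2⟩ | hnc | hnc
      · exact ⟨p, hp, h1, h2⟩
      · exfalso
        obtain ⟨r, _, ha, hb⟩ := v.2.1.2.2 (i p) (i p1) hp hp1
        exact hincomp p p1 hnc ⟨r, ha, hb⟩
      · exfalso
        obtain ⟨r, _, ha, hb⟩ := v.2.1.2.2 (i p) (i p2) hp hp2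
        exact hincomp p p2 hnc ⟨r, ha, hb⟩
  have hGult : ∀ v : StoneSp Q, v ∈ E → IsPUltrafilter (Gs v) := by
    intro v hv
    refine ⟨hGfil v hv, fun G hG hsub => ?_⟩
    refine Set.Subset.antisymm (fun p₀ hp₀ => ?_) hsub
    obtain ⟨p, hp, hc⟩ := hv.1 (i p₀)
    rcases hc with hle | hnc
    · exact v.2.1.2.1 (i p) (i p₀) hp hle
    · exfalso
      obtain ⟨r, _, h1, h2⟩ := hG.2.2 p p₀ (hsub hp) hp₀
      exact hnc ⟨i r, hmono r p h1, hmono r p₀ h2⟩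
  have hGinD : ∀ v : StoneSp Q, ∀ hv : v ∈ E,
      (⟨Gs v, hGult v hv⟩ : StoneSp P) ∈ D := by
    intro v hv
    exact ⟨fun q => hv.1 q, fun p1 p2 => hv.2 p1 p2⟩
  -- the maps are mutually inverse
  have hGF : ∀ u : StoneSp P, ∀ hu : u ∈ D,
      Gs (⟨Fs u, hFult u hu⟩ : StoneSp Q) = u.1 := by
    intro u hu
    have hfil : IsPFilter (Gs (⟨Fs u, hFult u hu⟩ : StoneSp Q)) :=
      hGfil _ (hFinE u hu)
    refine u.2.2 _ hfil fun p hp => ⟨p, hp, le_refl _⟩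
  have hFG : ∀ v : StoneSp Q, ∀ hv : v ∈ E,
      Fs (⟨Gs v, hGult v hv⟩ : StoneSp P) = v.1 := by
    intro v hv
    apply Set.Subset.antisymm
    · rintro q ⟨p, hp, hle⟩
      exact v.2.1.2.1 (i p) q hp hle
    · intro q hq
      obtain ⟨p, hp, hc⟩ := hv.1 q
      rcases hc with hle | hnc
      · exact ⟨p, hp, hle⟩
      · exfalso
        obtain ⟨r, _, h1, h2⟩ := v.2.1.2.2 (i p) q hp hq
        exact hnc ⟨r, h1, h2⟩
  -- package into a homeomorphism
  refine ⟨D, E, ?_, ?_, ?_⟩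
  · show Dᶜᶜ ∈ residual (StoneSp P)
    rwa [compl_compl]
  · show Eᶜᶜ ∈ residual (StoneSp Q)
    rwa [compl_compl]
  · refine ⟨{
      toFun := fun u => ⟨⟨Fs u.1, hFult u.1 u.2⟩, hFinE u.1 u.2⟩
      invFun := fun v => ⟨⟨Gs v.1, hGult v.1 v.2⟩, hGinD v.1 v.2⟩
      left_inv := fun u => Subtype.ext (Subtype.ext (by
        simpa using hGF u.1 u.2))
      right_inv := fun v => Subtype.ext (Subtype.ext (by
        simpa using hFG v.1 v.2))
      continuous_toFun := ?_
      continuous_invFun := ?_ }⟩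
    · apply Continuous.subtype_mk
      apply continuous_into_stone
      intro q
      have heq : (fun u : D => (⟨Fs u.1, hFult u.1 u.2⟩ : StoneSp Q)) ⁻¹' basicO q
          = Subtype.val ⁻¹' (⋃ p ∈ {p : P | i p ≤ q}, basicO p) := by
        ext u
        simp only [Set.mem_preimage, basicO, Set.mem_setOf_eq, Set.mem_iUnion]
        constructor
        · rintro ⟨p, hp, hle⟩
          exact ⟨p, hle, hp⟩
        · rintro ⟨p, hle, hp⟩
          exact ⟨p, hp, hle⟩
      refine (congrArg IsOpen heq).mpr ?_
      exact (isOpen_biUnion fun p _ => isOpen_basicO p).preimage continuous_subtype_val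
    · apply Continuous.subtype_mk
      apply continuous_into_stone
      intro p
      have heq : (fun v : E => (⟨Gs v.1, hGult v.1 v.2⟩ : StoneSp P)) ⁻¹' basicO p
          = Subtype.val ⁻¹' basicO (i p) := by
        ext v
        exact Iff.rfl
      refine (congrArg IsOpen heq).mpr ?_
      exact (isOpen_basicO (i p)).preimage continuous_subtype_val
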